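/- arXiv:1402.3330 — 3 statements merged into one kernel-verified Lean document; each statement's English description precedes it below -/
import Mathlib

section
/- Let X = (X₁,…,X_N) be a random vector with independent components having joint density f_X, and let y be square-integrable with ADD component functions y_u. Suppose the variance σ_u² := E[y_u²(X_u)] of every zero-mean ADD component function satisfies σ_u² ≤ c·q^{−|u|} for all ∅ ≠ u ⊆ {1,…,N}, where c > 0 and q > 1 are real constants. Then the mean-squared error committed by the S-variate ADD approximation, ẽ_S := E[(y(X) − ỹ_S(X))²], satisfies ẽ_S ≤ c · Σ_{s=S+1}^{N} binom(N, s) q^{−s}, for every 0 ≤ S ≤ N. -/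
open MeasureTheory Finset
open scoped BigOperators Classical

/-- The joint (product) measure of the independent coordinates. -/
noncomputable def joint {N : ℕ} (μ : Fin N → MeasureTheory.Measure ℝ) :
    MeasureTheory.Measure (Fin N → ℝ) :=
  MeasureTheory.Measure.pi μ

/-- The conditional mean of `y` given the coordinates in `u` (integrating out the rest). -/
noncomputable def condMean {N : ℕ} (μ : Fin N → MeasureTheory.Measure ℝ)
    (y : (Fin N → ℝ) → ℝ) (u : Finset (Fin N)) (x : Fin N → ℝ) : ℝ :=
  ∫ z, y (fun i => if i ∈ u then x i else z i) ∂(joint μ)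

/-- `Y` is the family of ANOVA dimensional decomposition (ADD) component functions of `y`. -/
def IsADD {N : ℕ} (μ : Fin N → MeasureTheory.Measure ℝ) (y : (Fin N → ℝ) → ℝ)
    (Y : Finset (Fin N) → (Fin N → ℝ) → ℝ) : Prop :=
  (∀ x, Y ∅ x = ∫ z, y z ∂(joint μ)) ∧
  ∀ u : Finset (Fin N), u ≠ ∅ → ∀ x,
    Y u x = condMean μ y u x - ∑ v ∈ u.powerset.erase u, Y v x

variable {N : ℕ} (μ : Fin N → MeasureTheory.Measure ℝ) [∀ i, IsProbabilityMeasure (μ i)]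

/-- combine: coordinates in `u` from `x`, others from `z`. -/
def comb (u : Finset (Fin N)) (p : (Fin N → ℝ) × (Fin N → ℝ)) : Fin N → ℝ :=
  fun i => if i ∈ u then p.1 i else p.2 i

lemma comb_measurable (u : Finset (Fin N)) : Measurable (comb u) := by
  apply measurable_pi_lambda
  intro i
  by_cases h : i ∈ u <;> simp only [comb, h, if_true, if_false]
  · exact (measurable_pi_apply i).comp measurable_fst
  · exact (measurable_pi_apply i).comp measurable_snd

instance : IsProbabilityMeasure (joint μ) := by
  unfold joint; infer_instance

lemma comb_measurePreserving (u : Finset (Fin N)) :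
    MeasurePreserving (comb u) ((joint μ).prod (joint μ)) (joint μ) := by
  refine ⟨comb_measurable u, ?_⟩
  unfold joint
  symm
  apply Measure.pi_eq
  intro s hs
  rw [Measure.map_apply (comb_measurable u) (MeasurableSet.univ_pi hs)]
  have : comb (N := N) u ⁻¹' (Set.univ.pi s) =
      (Set.univ.pi (fun i => if i ∈ u then s i else Set.univ)) ×ˢ
      (Set.univ.pi (fun i => if i ∈ u then Set.univ else s i)) := by
    ext p
    simp only [Set.mem_preimage, Set.mem_pi, Set.mem_univ, true_implies, Set.mem_prod, comb]
    constructor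
    · intro h
      constructor <;> intro i <;> by_cases hi : i ∈ u <;> simp [hi] <;> have := h i <;>
        simp [hi] at this <;> exact this
    · rintro ⟨h1, h2⟩ i
      by_cases hi : i ∈ u
      · have := h1 i; simpa [hi] using this
      · have := h2 i; simpa [hi] using this
  rw [this, Measure.prod_prod, Measure.pi_pi, Measure.pi_pi, ← Finset.prod_mul_distrib]
  refine Finset.prod_congr rfl fun i _ => ?_
  by_cases hi : i ∈ u <;> simp [hi, measure_univ]

/-- generalized conditional mean operator -/
noncomputable def cm (u : Finset (Fin N)) (g : (Fin N → ℝ) → ℝ) (x : Fin N → ℝ) : ℝ :=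
  ∫ z, g (comb u (x, z)) ∂(joint μ)

lemma condMean_eq_cm (y : (Fin N → ℝ) → ℝ) (u : Finset (Fin N)) :
    condMean μ y u = cm μ u y := rfl

lemma sq_integral_le {α : Type*} [MeasurableSpace α] {ν : Measure α} [IsProbabilityMeasure ν]
    {h : α → ℝ} (hh : MemLp h 2 ν) : (∫ a, h a ∂ν) ^ 2 ≤ ∫ a, (h a) ^ 2 ∂ν := by
  have h1 : Integrable h ν := hh.integrable one_le_two
  have h2 : Integrable (fun a => h a ^ 2) ν := hh.integrable_sq
  set m := ∫ a, h a ∂ν with hm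
  have hnn : 0 ≤ ∫ a, (h a - m) ^ 2 ∂ν := integral_nonneg fun a => sq_nonneg _
  have hexp : ∫ a, (h a - m) ^ 2 ∂ν = (∫ a, h a ^ 2 ∂ν) - m ^ 2 := by
    have : (fun a => (h a - m) ^ 2) = fun a => h a ^ 2 - (2 * m) * h a + m ^ 2 := by
      funext a; ring
    have hfg : Integrable (fun a => h a ^ 2 - 2 * m * h a) ν := h2.sub (h1.const_mul (2 * m))
    rw [this]
    rw [integral_add hfg (integrable_const _)]
    rw [integral_sub h2 (h1.const_mul (2 * m))]
    rw [integral_const_mul, integral_const]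
    simp [← hm]
    ring
  linarith

variable {μ}

lemma ae_comp_comb {g g' : (Fin N → ℝ) → ℝ} (u : Finset (Fin N)) (h : g =ᵐ[joint μ] g') :
    (fun p => g (comb u p)) =ᵐ[(joint μ).prod (joint μ)] (fun p => g' (comb u p)) := by
  have := MeasureTheory.ae_eq_comp (μ := (joint μ).prod (joint μ))
    (comb_measurable (N := N) u).aemeasurable
    (by rwa [(comb_measurePreserving μ u).map_eq] : g =ᵐ[((joint μ).prod (joint μ)).map (comb u)] g')
  exact this

lemma cm_congr_ae {g g' : (Fin N → ℝ) → ℝ} (u : Finset (Fin N)) (h : g =ᵐ[joint μ] g') :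
    cm μ u g =ᵐ[joint μ] cm μ u g' := by
  filter_upwards [Measure.ae_ae_of_ae_prod (ae_comp_comb u h)] with x hx
  exact integral_congr_ae hx

lemma cm_stronglyMeasurable (u : Finset (Fin N)) {g : (Fin N → ℝ) → ℝ}
    (hg : StronglyMeasurable g) : StronglyMeasurable (cm μ u g) :=
  (hg.comp_measurable (comb_measurable u)).integral_prod_right'

lemma integrable_comp_comb (u : Finset (Fin N)) {g : (Fin N → ℝ) → ℝ}
    (hg : Integrable g (joint μ)) :
    Integrable (fun p => g (comb u p)) ((joint μ).prod (joint μ)) := by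
  have h1 : AEStronglyMeasurable g (((joint μ).prod (joint μ)).map (comb u)) := by
    rw [(comb_measurePreserving μ u).map_eq]; exact hg.aestronglyMeasurable
  have := (integrable_map_measure h1 (comb_measurable (N := N) u).aemeasurable).mp
    (by rwa [(comb_measurePreserving μ u).map_eq])
  exact this

/-- resample lemma: integrating cm gives back the integral -/
lemma integral_cm (u : Finset (Fin N)) {g : (Fin N → ℝ) → ℝ} (hg : Integrable g (joint μ)) :
    ∫ x, cm μ u g x ∂(joint μ) = ∫ x, g x ∂(joint μ) := by
  have h := integrable_comp_comb u hg
  have := integral_integral (f := fun x z => g (comb u (x, z))) (by exact h)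
  rw [show (cm μ u g) = fun x => ∫ z, g (comb u (x,z)) ∂(joint μ) from rfl, this]
  rw [← integral_map (comb_measurable (N := N) u).aemeasurable
    (by rw [(comb_measurePreserving μ u).map_eq]; exact hg.aestronglyMeasurable),
    (comb_measurePreserving μ u).map_eq]

lemma memℒp2_mul_integrable {α : Type*} [MeasurableSpace α] {ν : Measure α}
    {f g : α → ℝ} (hf : MemLp f 2 ν) (hg : MemLp g 2 ν) :
    Integrable (fun x => f x * g x) ν := by
  have h : (1 : ENNReal) / 1 = 1 / 2 + 1 / 2 := by
    rw [ENNReal.div_add_div_same, one_div_one]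
    norm_num
    rw [ENNReal.div_self two_ne_zero ENNReal.ofNat_ne_top]
  have := (hf.smul hg (r := 1) : MemLp (g • f) 1 ν)
  have hint := memLp_one_iff_integrable.mp this
  exact (by simpa [mul_comm] using hint : Integrable (f * g) ν)

lemma cm_memℒp (u : Finset (Fin N)) {g : (Fin N → ℝ) → ℝ}
    (hsm : StronglyMeasurable g) (hg : MemLp g 2 (joint μ)) :
    MemLp (cm μ u g) 2 (joint μ) := by
  have hsq : Integrable (fun p => (g (comb u p)) ^ 2) ((joint μ).prod (joint μ)) := by
    have := integrable_comp_comb u (g := fun t => g t ^ 2) hg.integrable_sq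
    simpa using this
  have hsec := hsq.prod_right_ae
  have hsecae : ∀ᵐ x ∂(joint μ), (cm μ u g x) ^ 2 ≤ ∫ z, (g (comb u (x, z))) ^ 2 ∂(joint μ) := by
    filter_upwards [hsec] with x hx
    have hmem : MemLp (fun z => g (comb u (x, z))) 2 (joint μ) := by
      refine (memLp_two_iff_integrable_sq ?_).mpr hx
      exact (hsm.comp_measurable ((comb_measurable u).comp
        (measurable_const.prodMk measurable_id))).aestronglyMeasurable
    exact sq_integral_le hmem
  have hφ : Integrable (fun x => ∫ z, (g (comb u (x, z))) ^ 2 ∂(joint μ)) (joint μ) :=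
    hsq.integral_prod_left
  refine (memLp_two_iff_integrable_sq (cm_stronglyMeasurable u hsm).aestronglyMeasurable).mpr ?_
  refine Integrable.mono' hφ ?_ ?_
  · exact ((cm_stronglyMeasurable u hsm).pow 2).aestronglyMeasurable
  · filter_upwards [hsecae] with x hx
    rw [Real.norm_eq_abs, abs_of_nonneg (sq_nonneg _)]
    exact hx

lemma comb_comb (a b : Finset (Fin N)) (x w z : Fin N → ℝ) :
    comb a (comb b (x, w), z) = comb (a ∩ b) (x, comb (a \ b) (w, z)) := by
  funext i
  simp only [comb, Finset.mem_inter, Finset.mem_sdiff]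
  by_cases ha : i ∈ a <;> by_cases hb : i ∈ b <;> simp [ha, hb]

lemma cm_comb_self (b : Finset (Fin N)) (g : (Fin N → ℝ) → ℝ) (x w : Fin N → ℝ) :
    cm μ b g (comb b (x, w)) = cm μ b g x := by
  unfold cm
  congr 1
  funext z
  congr 1
  funext i
  simp only [comb]
  by_cases hb : i ∈ b <;> simp [hb]

lemma cm_cm (a b : Finset (Fin N)) {g : (Fin N → ℝ) → ℝ}
    (hsm : StronglyMeasurable g) (hg1 : Integrable g (joint μ)) :
    cm μ b (cm μ a g) =ᵐ[joint μ] cm μ (a ∩ b) g := by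
  have hPP : Integrable (fun p => g (comb (a ∩ b) p)) ((joint μ).prod (joint μ)) :=
    integrable_comp_comb (a ∩ b) hg1
  filter_upwards [hPP.prod_right_ae] with x hx
  have hFsm : StronglyMeasurable (fun v => g (comb (a ∩ b) (x, v))) :=
    hsm.comp_measurable ((comb_measurable (a ∩ b)).comp (measurable_const.prodMk measurable_id))
  calc cm μ b (cm μ a g) x
      = ∫ w, ∫ z, g (comb a (comb b (x, w), z)) ∂(joint μ) ∂(joint μ) := rfl
    _ = ∫ w, ∫ z, g (comb (a ∩ b) (x, comb (a \ b) (w, z))) ∂(joint μ) ∂(joint μ) := by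
        simp_rw [comb_comb]
    _ = ∫ w, cm μ (a \ b) (fun v => g (comb (a ∩ b) (x, v))) w ∂(joint μ) := rfl
    _ = ∫ v, g (comb (a ∩ b) (x, v)) ∂(joint μ) := integral_cm (a \ b) hx
    _ = cm μ (a ∩ b) g x := rfl

lemma J_inter (a b : Finset (Fin N)) {g : (Fin N → ℝ) → ℝ}
    (hsm : StronglyMeasurable g) (hg : MemLp g 2 (joint μ)) :
    ∫ x, cm μ a g x * cm μ b g x ∂(joint μ) =
    ∫ x, cm μ (a ∩ b) g x * cm μ b g x ∂(joint μ) := by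
  have hA := cm_memℒp a hsm hg
  have hB := cm_memℒp b hsm hg
  have hAB := cm_memℒp (a ∩ b) hsm hg
  have hprod : Integrable (fun x => cm μ a g x * cm μ b g x) (joint μ) :=
    memℒp2_mul_integrable hA hB
  have step1 : ∫ x, cm μ a g x * cm μ b g x ∂(joint μ) =
      ∫ x, cm μ b (fun t => cm μ a g t * cm μ b g t) x ∂(joint μ) :=
    (integral_cm b hprod).symm
  have step2 : ∀ x, cm μ b (fun t => cm μ a g t * cm μ b g t) x =
      cm μ b (cm μ a g) x * cm μ b g x := by
    intro x
    calc cm μ b (fun t => cm μ a g t * cm μ b g t) x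
        = ∫ w, cm μ a g (comb b (x, w)) * cm μ b g (comb b (x, w)) ∂(joint μ) := rfl
      _ = ∫ w, cm μ a g (comb b (x, w)) * cm μ b g x ∂(joint μ) := by
          simp_rw [cm_comb_self]
      _ = (∫ w, cm μ a g (comb b (x, w)) ∂(joint μ)) * cm μ b g x := integral_mul_const _ _
      _ = cm μ b (cm μ a g) x * cm μ b g x := rfl
  rw [step1]
  simp_rw [step2]
  refine integral_congr_ae ?_
  filter_upwards [cm_cm a b hsm (hg.integrable one_le_two)] with x hx
  rw [hx]

lemma J_eq (a b : Finset (Fin N)) {g : (Fin N → ℝ) → ℝ}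
    (hsm : StronglyMeasurable g) (hg : MemLp g 2 (joint μ)) :
    ∫ x, cm μ a g x * cm μ b g x ∂(joint μ) =
    ∫ x, cm μ (a ∩ b) g x * cm μ (a ∩ b) g x ∂(joint μ) := by
  rw [J_inter a b hsm hg]
  have comm : ∫ x, cm μ (a ∩ b) g x * cm μ b g x ∂(joint μ) =
      ∫ x, cm μ b g x * cm μ (a ∩ b) g x ∂(joint μ) := by
    congr 1; funext x; ring
  rw [comm, J_inter b (a ∩ b) hsm hg, Finset.inter_eq_right.mpr Finset.inter_subset_right]

section Combinatorics
variable {ι : Type*} [DecidableEq ι]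

lemma neg_one_pow_sub {m k : ℕ} (h : k ≤ m) : (-1:ℝ)^(m-k) = (-1)^m * (-1)^k := by
  have h1 : (-1:ℝ)^(m-k) * (-1)^k = (-1)^m := by rw [← pow_add, Nat.sub_add_cancel h]
  have h2 : ((-1:ℝ)^k) * ((-1:ℝ)^k) = 1 := by
    rw [← pow_add]; exact Even.neg_one_pow ⟨k, rfl⟩
  calc (-1:ℝ)^(m-k) = (-1)^(m-k) * ((-1)^k * (-1)^k) := by rw [h2, mul_one]
    _ = ((-1)^(m-k) * (-1)^k) * (-1)^k := by ring
    _ = (-1)^m * (-1)^k := by rw [h1]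

lemma alt_sum (s : Finset ι) :
    ∑ t ∈ s.powerset, (-1:ℝ)^(s.card - t.card) = if s = ∅ then 1 else 0 := by
  have hc : ∀ t ∈ s.powerset, (-1:ℝ)^(s.card - t.card) = (-1)^s.card * (-1)^t.card := fun t ht =>
    neg_one_pow_sub (Finset.card_le_card (Finset.mem_powerset.mp ht))
  rw [Finset.sum_congr rfl hc, ← Finset.mul_sum]
  have hz : ∑ t ∈ s.powerset, (-1:ℝ)^t.card = ((∑ t ∈ s.powerset, (-1:ℤ)^t.card : ℤ) : ℝ) := by
    push_cast; rfl
  rw [hz, Finset.sum_powerset_neg_one_pow_card]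
  by_cases h : s = ∅ <;> simp [h]

lemma interval_sum (u w : Finset ι) (hw : w ⊆ u) :
    ∑ v ∈ u.powerset.filter (fun v => w ⊆ v), (-1:ℝ)^(u.card - v.card)
      = if w = u then 1 else 0 := by
  have key : ∑ v ∈ u.powerset.filter (fun v => w ⊆ v), (-1:ℝ)^(u.card - v.card)
      = ∑ t ∈ (u \ w).powerset, (-1:ℝ)^((u \ w).card - t.card) := by
    refine Finset.sum_nbij' (fun v => v \ w) (fun t => t ∪ w) ?_ ?_ ?_ ?_ ?_
    · intro v hv
      simp only [Finset.mem_filter, Finset.mem_powerset] at hv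
      exact Finset.mem_powerset.mpr (Finset.sdiff_subset_sdiff hv.1 (Finset.Subset.refl w))
    · intro t ht
      simp only [Finset.mem_powerset] at ht
      simp only [Finset.mem_filter, Finset.mem_powerset]
      exact ⟨Finset.union_subset (ht.trans Finset.sdiff_subset) hw, Finset.subset_union_right⟩
    · intro v hv
      simp only [Finset.mem_filter, Finset.mem_powerset] at hv
      exact Finset.sdiff_union_of_subset hv.2
    · intro t ht
      simp only [Finset.mem_powerset] at ht
      exact Finset.union_sdiff_cancel_right (Finset.disjoint_of_subset_left ht Finset.sdiff_disjoint)
    · intro v hv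
      simp only [Finset.mem_filter, Finset.mem_powerset] at hv
      have h3 : w.card ≤ v.card := Finset.card_le_card hv.2
      have h4 : v.card ≤ u.card := Finset.card_le_card hv.1
      have h5 : w.card ≤ u.card := Finset.card_le_card hw
      have he : (u \ w).card - (v \ w).card = u.card - v.card := by
        rw [Finset.card_sdiff_of_subset hw, Finset.card_sdiff_of_subset hv.2]; omega
      rw [he]
  rw [key, alt_sum]
  have : (u \ w = ∅) ↔ (w = u) := by
    constructor
    · intro h
      exact (Finset.Subset.antisymm hw (Finset.sdiff_eq_empty_iff_subset.mp h))
    · intro h; simp [h]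
  by_cases h : w = u
  · simp [h]
  · rw [if_neg (fun hh => h (this.mp hh)), if_neg h]

lemma mobius_inv (Y G : Finset ι → ℝ) (h : ∀ u, ∑ v ∈ u.powerset, Y v = G u) (u : Finset ι) :
    Y u = ∑ v ∈ u.powerset, (-1:ℝ)^(u.card - v.card) * G v := by
  have swap1 : ∑ v ∈ u.powerset, (-1:ℝ)^(u.card-v.card) * G v
      = ∑ v ∈ u.powerset, ∑ w ∈ v.powerset, (-1:ℝ)^(u.card-v.card) * Y w := by
    refine Finset.sum_congr rfl fun v hv => ?_
    rw [← h v, Finset.mul_sum]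
  have swap2 : ∑ v ∈ u.powerset, ∑ w ∈ v.powerset, (-1:ℝ)^(u.card-v.card) * Y w
      = ∑ w ∈ u.powerset, ∑ v ∈ u.powerset.filter (fun v => w ⊆ v),
          (-1:ℝ)^(u.card-v.card) * Y w := by
    refine Finset.sum_comm' ?_
    intro v w
    simp only [Finset.mem_powerset, Finset.mem_filter]
    constructor
    · rintro ⟨h1, h2⟩
      have h3 := h2.trans h1
      tauto
    · intro h
      tauto
  rw [swap1, swap2]
  have inner : ∀ w ∈ u.powerset, ∑ v ∈ u.powerset.filter (fun v => w ⊆ v),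
      (-1:ℝ)^(u.card-v.card) * Y w = (if w = u then 1 else 0) * Y w := by
    intro w hw
    rw [← Finset.sum_mul, interval_sum u w (Finset.mem_powerset.mp hw)]
  rw [Finset.sum_congr rfl inner]
  simp only [ite_mul, one_mul, zero_mul]
  rw [Finset.sum_ite_eq' u.powerset u Y]
  simp

lemma inter_erase_eq (a b : Finset ι) (i : ι) (hiv : i ∉ b) : (a.erase i) ∩ b = a ∩ b := by
  ext j
  simp only [Finset.mem_inter, Finset.mem_erase]
  constructor
  · rintro ⟨⟨_, hj⟩, hb⟩; exact ⟨hj, hb⟩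
  · rintro ⟨ha, hb⟩
    exact ⟨⟨fun hji => hiv (hji ▸ hb), ha⟩, hb⟩

lemma inter_insert_eq (a b : Finset ι) (i : ι) (hiv : i ∉ b) : (insert i a) ∩ b = a ∩ b := by
  ext j
  simp only [Finset.mem_inter, Finset.mem_insert]
  constructor
  · rintro ⟨hj | hj, hb⟩
    · exact absurd (hj ▸ hb) hiv
    · exact ⟨hj, hb⟩
  · rintro ⟨ha, hb⟩; exact ⟨Or.inr ha, hb⟩

lemma cancel_sum (u v : Finset ι) (i : ι) (hiu : i ∈ u) (hiv : i ∉ v) (K : Finset ι → ℝ) :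
    ∑ a ∈ u.powerset, ∑ b ∈ v.powerset,
      (-1:ℝ)^(u.card-a.card) * (-1:ℝ)^(v.card-b.card) * K (a ∩ b) = 0 := by
  rw [Finset.sum_comm]
  refine Finset.sum_eq_zero fun b hb => ?_
  have hib : i ∉ b := fun h => hiv (Finset.mem_powerset.mp hb h)
  refine Finset.sum_involution (fun a _ => if i ∈ a then a.erase i else insert i a)
    ?_ ?_ ?_ ?_
  · intro a ha
    simp only [Finset.mem_powerset] at ha
    have hac : a.card ≤ u.card := Finset.card_le_card ha
    by_cases hia : i ∈ a
    · simp only [hia, if_true]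
      rw [inter_erase_eq a b i hib]
      have hc : (a.erase i).card = a.card - 1 := Finset.card_erase_of_mem hia
      have hpos : 1 ≤ a.card := Finset.card_pos.mpr ⟨i, hia⟩
      have h5 : u.card - (a.erase i).card = (u.card - a.card) + 1 := by omega
      rw [h5, pow_succ]
      ring
    · simp only [hia, if_false]
      rw [inter_insert_eq a b i hib]
      have hc : (insert i a).card = a.card + 1 := Finset.card_insert_of_notMem hia
      have hsub : insert i a ⊆ u := Finset.insert_subset hiu ha
      have hle : (insert i a).card ≤ u.card := Finset.card_le_card hsub
      have : u.card - a.card = (u.card - (insert i a).card) + 1 := by omega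
      rw [this, pow_succ]
      ring
  · intro a ha hne
    by_cases hia : i ∈ a <;> simp only [hia, if_true, if_false]
    · intro h
      exact absurd (h ▸ (Finset.notMem_erase i a)) (by simpa using hia)
    · intro h
      exact hia (h ▸ Finset.mem_insert_self i a)
  · intro a ha
    simp only [Finset.mem_powerset] at ha ⊢
    by_cases hia : i ∈ a <;> simp only [hia, if_true, if_false]
    · exact (Finset.erase_subset i a).trans ha
    · exact Finset.insert_subset hiu ha
  · intro a ha
    by_cases hia : i ∈ a <;> simp only [hia, if_true, if_false]
    · rw [if_neg (Finset.notMem_erase i a), Finset.insert_erase hia]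
    · rw [if_pos (Finset.mem_insert_self i a), Finset.erase_insert hia]

end Combinatorics

/-- Proposition 1: if the variances of the ADD component functions decay
geometrically, `σ_u² ≤ c q^{-|u|}`, then the mean-squared error of the `S`-variate ADD
approximation is bounded by `c ∑_{s=S+1}^{N} C(N,s) q^{-s}`. -/
theorem stmt1 {N : ℕ}
    (f : Fin N → ℝ → ℝ) (hf : ∀ i, Measurable (f i)) (hf0 : ∀ i t, 0 ≤ f i t)
    (μ : Fin N → MeasureTheory.Measure ℝ) [∀ i, IsProbabilityMeasure (μ i)]
    (hμ : ∀ i, μ i = (volume : MeasureTheory.Measure ℝ).withDensity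
      fun t => ENNReal.ofReal (f i t))
    (y : (Fin N → ℝ) → ℝ) (hy : MemLp y 2 (joint μ))
    (Y : Finset (Fin N) → (Fin N → ℝ) → ℝ) (hY : IsADD μ y Y)
    (c q : ℝ) (hc : 0 < c) (hq : 1 < q)
    (hvar : ∀ u : Finset (Fin N), u ≠ ∅ →
      ∫ x, (Y u x) ^ 2 ∂(joint μ) ≤ c / q ^ u.card) :
    ∀ S : ℕ, S ≤ N →
      ∫ x, (y x - ∑ u ∈ Finset.univ.filter (fun u : Finset (Fin N) => u.card ≤ S),
          Y u x) ^ 2 ∂(joint μ) ≤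
        c * ∑ s ∈ Finset.Icc (S + 1) N, ((N.choose s : ℝ) / q ^ s) := by
  intro S hS
  set P := joint μ with hP
  set ysm := hy.1.mk y with hysm_def
  have hysm : StronglyMeasurable ysm := hy.1.stronglyMeasurable_mk
  have haey : y =ᵐ[P] ysm := hy.1.ae_eq_mk
  have hy2 : MemLp ysm 2 P := hy.ae_eq haey
  -- sum over powerset = conditional mean
  have hsum : ∀ u : Finset (Fin N), ∀ x, ∑ v ∈ u.powerset, Y v x = condMean μ y u x := by
    intro u x
    by_cases hu : u = ∅
    · subst hu
      rw [Finset.powerset_empty, Finset.sum_singleton, hY.1 x]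
      simp [condMean]
    · have hm : u ∈ u.powerset := Finset.mem_powerset_self u
      rw [← Finset.add_sum_erase _ _ hm, hY.2 u hu x]
      ring
  -- Möbius inversion
  have hY_eq : ∀ u x, Y u x =
      ∑ v ∈ u.powerset, (-1:ℝ)^(u.card - v.card) * condMean μ y v x := fun u x =>
    mobius_inv (fun v => Y v x) (fun v => condMean μ y v x) (fun v => hsum v x) u
  have hcm_ae : ∀ v : Finset (Fin N), condMean μ y v =ᵐ[P] cm μ v ysm := by
    intro v
    rw [condMean_eq_cm]
    exact cm_congr_ae v haey
  have hall : ∀ᵐ x ∂P, ∀ v : Finset (Fin N), condMean μ y v x = cm μ v ysm x :=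
    ae_all_iff.mpr hcm_ae
  set W : Finset (Fin N) → (Fin N → ℝ) → ℝ :=
    fun u x => ∑ v ∈ u.powerset, (-1:ℝ)^(u.card - v.card) * cm μ v ysm x with hW_def
  have hYW : ∀ u, Y u =ᵐ[P] W u := by
    intro u
    filter_upwards [hall] with x hx
    rw [hY_eq u x]
    exact Finset.sum_congr rfl fun v _ => by rw [hx v]
  have hWmem : ∀ u, MemLp (W u) 2 P := by
    intro u
    have h := memLp_finset_sum (μ := P) (p := 2) u.powerset
      (f := fun v => fun x => (-1:ℝ)^(u.card - v.card) * cm μ v ysm x)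
      (fun v _ => (cm_memℒp v hysm hy2).const_mul _)
    exact h
  have hYmem : ∀ u, MemLp (Y u) 2 P := fun u => (hWmem u).ae_eq (hYW u).symm
  -- orthogonality
  set K : Finset (Fin N) → ℝ := fun w => ∫ x, cm μ w ysm x * cm μ w ysm x ∂P with hK
  have horth : ∀ u v : Finset (Fin N), u ≠ v → ∫ x, Y u x * Y v x ∂P = 0 := by
    intro u v huv
    have step1 : ∫ x, Y u x * Y v x ∂P = ∫ x, W u x * W v x ∂P := by
      refine integral_congr_ae ?_
      filter_upwards [hYW u, hYW v] with x h1 h2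
      rw [h1, h2]
    have step2 : ∫ x, W u x * W v x ∂P =
        ∑ a ∈ u.powerset, ∑ b ∈ v.powerset,
          (-1:ℝ)^(u.card - a.card) * (-1:ℝ)^(v.card - b.card) *
            ∫ x, cm μ a ysm x * cm μ b ysm x ∂P := by
      have hint : ∀ (a b : Finset (Fin N)), Integrable
          (fun x => ((-1:ℝ)^(u.card - a.card) * cm μ a ysm x) *
            ((-1:ℝ)^(v.card - b.card) * cm μ b ysm x)) P :=
        fun a b => memℒp2_mul_integrable ((cm_memℒp a hysm hy2).const_mul _)
          ((cm_memℒp b hysm hy2).const_mul _)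
      calc ∫ x, W u x * W v x ∂P
          = ∫ x, ∑ a ∈ u.powerset, ∑ b ∈ v.powerset,
              ((-1:ℝ)^(u.card - a.card) * cm μ a ysm x) *
              ((-1:ℝ)^(v.card - b.card) * cm μ b ysm x) ∂P := by
            congr 1; funext x
            rw [hW_def]
            rw [Finset.sum_mul_sum]
        _ = ∑ a ∈ u.powerset, ∑ b ∈ v.powerset, ∫ x,
              ((-1:ℝ)^(u.card - a.card) * cm μ a ysm x) *
              ((-1:ℝ)^(v.card - b.card) * cm μ b ysm x) ∂P := by
            rw [integral_finset_sum _ (fun a _ => integrable_finset_sum _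
              (fun b _ => hint a b))]
            exact Finset.sum_congr rfl fun a _ =>
              integral_finset_sum _ (fun b _ => hint a b)
        _ = ∑ a ∈ u.powerset, ∑ b ∈ v.powerset,
              (-1:ℝ)^(u.card - a.card) * (-1:ℝ)^(v.card - b.card) *
              ∫ x, cm μ a ysm x * cm μ b ysm x ∂P := by
            refine Finset.sum_congr rfl fun a _ => Finset.sum_congr rfl fun b _ => ?_
            rw [← integral_const_mul]
            congr 1; funext x; ring
    have step3 : ∀ a b : Finset (Fin N),
        ∫ x, cm μ a ysm x * cm μ b ysm x ∂P =
        K (a ∩ b) := fun a b =>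
      J_eq a b hysm hy2
    rw [step1, step2]
    have step4 : ∑ a ∈ u.powerset, ∑ b ∈ v.powerset,
        (-1:ℝ)^(u.card - a.card) * (-1:ℝ)^(v.card - b.card) *
          ∫ x, cm μ a ysm x * cm μ b ysm x ∂P
        = ∑ a ∈ u.powerset, ∑ b ∈ v.powerset,
        (-1:ℝ)^(u.card - a.card) * (-1:ℝ)^(v.card - b.card) *
          K (a ∩ b) := by
      refine Finset.sum_congr rfl fun a _ => Finset.sum_congr rfl fun b _ => ?_
      rw [step3 a b]
    rw [step4]
    -- cancellation
    by_cases hcase : ∃ i, i ∈ u ∧ i ∉ v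
    · obtain ⟨i, hiu, hiv⟩ := hcase
      exact cancel_sum u v i hiu hiv _
    · push_neg at hcase
      have husubv : u ⊆ v := fun i hi => hcase i hi
      have : ∃ i, i ∈ v ∧ i ∉ u := by
        by_contra hno
        push_neg at hno
        exact huv (Finset.Subset.antisymm husubv (fun i hi => hno i hi))
      obtain ⟨i, hiv', hiu'⟩ := this
      rw [Finset.sum_comm]
      have : ∀ b ∈ v.powerset, ∀ a ∈ u.powerset,
          (-1:ℝ)^(u.card - a.card) * (-1:ℝ)^(v.card - b.card) *
            K (a ∩ b)
          = (-1:ℝ)^(v.card - b.card) * (-1:ℝ)^(u.card - a.card) *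
            K (b ∩ a) := by
        intro b _ a _
        rw [Finset.inter_comm]
        ring
      rw [Finset.sum_congr rfl fun b hb => Finset.sum_congr rfl fun a ha => this b hb a ha]
      exact cancel_sum v u i hiv' hiu' _
  -- pointwise identity for the error
  have hptwise : ∀ x, y x - ∑ u ∈ Finset.univ.filter
      (fun u : Finset (Fin N) => u.card ≤ S), Y u x
      = ∑ u ∈ Finset.univ.filter (fun u : Finset (Fin N) => ¬ u.card ≤ S), Y u x := by
    intro x
    have h1 : ∑ v ∈ (Finset.univ : Finset (Fin N)).powerset, Y v x = condMean μ y univ x :=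
      hsum univ x
    have h2 : condMean μ y (univ : Finset (Fin N)) x = y x := by
      have he : (fun (z : Fin N → ℝ) =>
          y (fun i => if i ∈ (univ : Finset (Fin N)) then x i else z i)) = fun _ => y x := by
        funext z; congr 1
        funext i; simp
      rw [condMean, he, integral_const]
      simp [hP]
    rw [Finset.powerset_univ] at h1
    have h3 := Finset.sum_filter_add_sum_filter_not (Finset.univ : Finset (Finset (Fin N)))
      (fun u => u.card ≤ S) (fun u => Y u x)
    rw [h1, h2] at h3
    linarith
  have hgoal_lhs : ∫ x, (y x - ∑ u ∈ Finset.univ.filter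
      (fun u : Finset (Fin N) => u.card ≤ S), Y u x) ^ 2 ∂(joint μ)
      = ∫ x, (∑ u ∈ Finset.univ.filter (fun u : Finset (Fin N) => ¬ u.card ≤ S), Y u x) ^ 2
          ∂(joint μ) := by
    congr 1; funext x; rw [hptwise x]
  rw [hgoal_lhs]
  set T := Finset.univ.filter (fun u : Finset (Fin N) => ¬ u.card ≤ S) with hT
  -- expand square
  have hexp : ∫ x, (∑ u ∈ T, Y u x) ^ 2 ∂P
      = ∑ u ∈ T, ∑ v ∈ T, ∫ x, Y u x * Y v x ∂P := by
    have hint : ∀ (a b : Finset (Fin N)), Integrable (fun x => Y a x * Y b x) P :=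
      fun a b => memℒp2_mul_integrable (hYmem a) (hYmem b)
    calc ∫ x, (∑ u ∈ T, Y u x) ^ 2 ∂P
        = ∫ x, ∑ u ∈ T, ∑ v ∈ T, Y u x * Y v x ∂P := by
          congr 1; funext x
          rw [pow_two, Finset.sum_mul_sum]
      _ = ∑ u ∈ T, ∑ v ∈ T, ∫ x, Y u x * Y v x ∂P := by
          rw [integral_finset_sum _ (fun a _ => integrable_finset_sum _ (fun b _ => hint a b))]
          exact Finset.sum_congr rfl fun a _ => integral_finset_sum _ (fun b _ => hint a b)
  have hdiag : ∑ u ∈ T, ∑ v ∈ T, ∫ x, Y u x * Y v x ∂P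
      = ∑ u ∈ T, ∫ x, (Y u x) ^ 2 ∂P := by
    refine Finset.sum_congr rfl fun u hu => ?_
    rw [Finset.sum_eq_single_of_mem u hu (fun b _ hbu => horth u b (fun h => hbu h.symm))]
    congr 1; funext x; rw [pow_two]
  have hbound : ∑ u ∈ T, ∫ x, (Y u x) ^ 2 ∂P ≤ ∑ u ∈ T, c / q ^ u.card := by
    refine Finset.sum_le_sum fun u hu => ?_
    have hu' : ¬ u.card ≤ S := (Finset.mem_filter.mp hu).2
    have hne : u ≠ ∅ := by
      intro h
      rw [h] at hu'
      simp at hu'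
    exact hvar u hne
  have hcount : ∑ u ∈ T, c / q ^ u.card
      = c * ∑ s ∈ Finset.Icc (S + 1) N, ((N.choose s : ℝ) / q ^ s) := by
    have hmaps : ∀ u ∈ T, u.card ∈ Finset.Icc (S + 1) N := by
      intro u hu
      have hu' : ¬ u.card ≤ S := (Finset.mem_filter.mp hu).2
      have hle : u.card ≤ N := by
        have := Finset.card_le_univ u
        simpa using this
      exact Finset.mem_Icc.mpr ⟨by omega, hle⟩
    rw [← Finset.sum_fiberwise_of_maps_to hmaps (fun u => c / q ^ u.card)]
    rw [Finset.mul_sum]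
    refine Finset.sum_congr rfl fun s hs => ?_
    have hs' : S + 1 ≤ s := (Finset.mem_Icc.mp hs).1
    have hTs : T.filter (fun u => u.card = s) =
        Finset.univ.filter (fun u : Finset (Fin N) => u.card = s) := by
      rw [hT, Finset.filter_filter]
      refine Finset.filter_congr fun u _ => ?_
      constructor
      · rintro ⟨_, h⟩; exact h
      · intro h; exact ⟨by omega, h⟩
    rw [hTs]
    have hcard : (Finset.univ.filter (fun u : Finset (Fin N) => u.card = s)).card
        = N.choose s := by
      have := Finset.card_powersetCard s (Finset.univ : Finset (Fin N))
      rw [Finset.powersetCard_eq_filter, Finset.powerset_univ] at this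
      simpa using this
    have hconst : ∑ u ∈ Finset.univ.filter (fun u : Finset (Fin N) => u.card = s),
        c / q ^ u.card = ∑ u ∈ Finset.univ.filter
          (fun u : Finset (Fin N) => u.card = s), c / q ^ s := by
      refine Finset.sum_congr rfl fun u hu => ?_
      rw [(Finset.mem_filter.mp hu).2]
    rw [hconst, Finset.sum_const, hcard, nsmul_eq_mul]
    ring
  calc ∫ x, (∑ u ∈ T, Y u x) ^ 2 ∂P = ∑ u ∈ T, ∑ v ∈ T, ∫ x, Y u x * Y v x ∂P := hexp
    _ = ∑ u ∈ T, ∫ x, (Y u x) ^ 2 ∂P := hdiag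
    _ ≤ ∑ u ∈ T, c / q ^ u.card := hbound
    _ = c * ∑ s ∈ Finset.Icc (S + 1) N, ((N.choose s : ℝ) / q ^ s) := hcount
end

section
/- Let X = (X₁,…,X_N) be a random vector with independent components having joint density f_X, and let y be square-integrable with respect to f_X. For m ≥ 1, let ỹ_{N,m} denote the N-variate, m-th order truncated PDD approximation of y and let y̌_m denote the m-th order PCE approximation of y (retaining all tensor-product orthonormal polynomial terms of total degree at most m). Then the PCE error is at least the PDD error: e_m := E[(y(X) − y̌_m(X))²] ≥ E[(y(X) − ỹ_{N,m}(X))²] =: e_{N,m}, regardless of the values of the expansion coefficients. -/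
open MeasureTheory Finset
open scoped BigOperators Classical

/-- The product orthonormal polynomial `ψ_{u,j}(x) = ∏_{i ∈ u} ψ_{i, j_i}(x_i)`. -/
noncomputable def prodPsi {N : ℕ} (ψ : Fin N → ℕ → ℝ → ℝ) (u : Finset (Fin N))
    (j : Fin N → ℕ) (x : Fin N → ℝ) : ℝ :=
  ∏ i ∈ u, ψ i (j i) (x i)

/-- The PDD expansion coefficient `C_{u,j} = ∫ y(x) ψ_{u,j}(x_u) f_X(x) dx`. -/
noncomputable def pddCoeff {N : ℕ} (μ : Fin N → MeasureTheory.Measure ℝ)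
    (y : (Fin N → ℝ) → ℝ) (ψ : Fin N → ℕ → ℝ → ℝ) (u : Finset (Fin N))
    (j : Fin N → ℕ) : ℝ :=
  ∫ x, y x * prodPsi ψ u j x ∂(joint μ)

/-- Admissible multi-indices for the component `u`: supported on `u`, components in `{1,…,m}`. -/
noncomputable def indexFinset {N : ℕ} (u : Finset (Fin N)) (m : ℕ) : Finset (Fin N → ℕ) :=
  (Finset.Icc 0 fun _ => m).filter fun j => (∀ i ∈ u, 1 ≤ j i) ∧ ∀ i ∉ u, j i = 0

/-- The set of all admissible multi-indices for the component `u`: supported on `u` with all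
components there at least `1`. -/
def indexSet {N : ℕ} (u : Finset (Fin N)) : Set (Fin N → ℕ) :=
  {j | (∀ i ∈ u, 1 ≤ j i) ∧ ∀ i ∉ u, j i = 0}

/-- `ψ` is, coordinatewise, a complete orthonormal system in `L²(μ i)` with `ψ_{i,0} = 1`. -/
def IsONBasis {N : ℕ} (μ : Fin N → MeasureTheory.Measure ℝ)
    (ψ : Fin N → ℕ → ℝ → ℝ) : Prop :=
  (∀ i t, ψ i 0 t = 1) ∧
  (∀ i j, MemLp (ψ i j) 2 (μ i)) ∧
  (∀ i j k, ∫ t, ψ i j t * ψ i k t ∂(μ i) = if j = k then 1 else 0) ∧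
  (∀ i (g : ℝ → ℝ), MemLp g 2 (μ i) →
    (∀ j, ∫ t, g t * ψ i j t ∂(μ i) = 0) → g =ᵐ[μ i] 0)

/-- The `S`-variate, `m`-th order truncated PDD approximation `ỹ_{S,m}`. -/
noncomputable def pddTrunc {N : ℕ} (μ : Fin N → MeasureTheory.Measure ℝ)
    (y : (Fin N → ℝ) → ℝ) (ψ : Fin N → ℕ → ℝ → ℝ) (S m : ℕ) (x : Fin N → ℝ) : ℝ :=
  (∫ z, y z ∂(joint μ)) +
    ∑ u ∈ Finset.univ.filter (fun u : Finset (Fin N) => u ≠ ∅ ∧ u.card ≤ S),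
      ∑ j ∈ indexFinset u m, pddCoeff μ y ψ u j * prodPsi ψ u j x

/-- The `m`-th order PCE approximation `y̌_m`: all tensor-product orthonormal polynomial terms
of total degree at most `m`, with coefficients given by the corresponding inner products. -/
noncomputable def pceApprox {N : ℕ} (μ : Fin N → MeasureTheory.Measure ℝ)
    (y : (Fin N → ℝ) → ℝ) (ψ : Fin N → ℕ → ℝ → ℝ) (m : ℕ) (x : Fin N → ℝ) : ℝ :=
  ∑ j ∈ (Finset.Icc (0 : Fin N → ℕ) fun _ => m).filter (fun j => ∑ i, j i ≤ m),
    pddCoeff μ y ψ Finset.univ j * prodPsi ψ Finset.univ j x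

section Aux

open MeasureTheory

/-- Product of two `L²` functions is integrable. -/
lemma integrable_mul_of_memL2 {α : Type*} [MeasurableSpace α] {ν : MeasureTheory.Measure α}
    {f g : α → ℝ} (hf : MemLp f 2 ν) (hg : MemLp g 2 ν) :
    Integrable (fun x => f x * g x) ν := by
  have hpqr : (1 : ENNReal) / 1 = 1 / 2 + 1 / 2 := by
    rw [ENNReal.add_halves, one_div_one]
  have h : MemLp (f • g) 1 ν := hg.smul hf (hpqr := ⟨by rw [inv_one, ENNReal.inv_two_add_inv_two]⟩)
  have h' : Integrable (f • g) ν := memLp_one_iff_integrable.mp h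
  exact h'

/-- Integrability of a product of coordinatewise integrable functions over a product measure. -/
lemma integrable_joint_prod {N : ℕ} (μ : Fin N → MeasureTheory.Measure ℝ)
    [∀ i, IsProbabilityMeasure (μ i)] {g : Fin N → ℝ → ℝ}
    (hg : ∀ i, Integrable (g i) (μ i)) :
    Integrable (fun x : Fin N → ℝ => ∏ i, g i (x i)) (joint μ) :=
  MeasureTheory.Integrable.fintype_prod_dep (μ := μ) hg

/-- Fubini for a product of coordinatewise functions over a product measure. -/
lemma integral_joint_prod {N : ℕ} (μ : Fin N → MeasureTheory.Measure ℝ)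
    [∀ i, IsProbabilityMeasure (μ i)] (g : Fin N → ℝ → ℝ) :
    ∫ x, ∏ i, g i (x i) ∂(joint μ) = ∏ i, ∫ t, g i t ∂(μ i) :=
  MeasureTheory.integral_fintype_prod_eq_prod (μ := μ) g

/-- Mean-square error of a truncated expansion in a finite orthonormal family. -/
lemma proj_error {α : Type*} [MeasurableSpace α] {ν : MeasureTheory.Measure α}
    {κ : Type*} [DecidableEq κ] (s : Finset κ) (y : α → ℝ) (e : κ → α → ℝ)
    (hy : MemLp y 2 ν) (he : ∀ j, MemLp (e j) 2 ν)
    (horth : ∀ j k, ∫ x, e j x * e k x ∂ν = if j = k then 1 else 0)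
    (c : κ → ℝ) (hcdef : ∀ j, c j = ∫ t, y t * e j t ∂ν) :
    ∫ x, (y x - ∑ j ∈ s, c j * e j x) ^ 2 ∂ν
      = (∫ x, y x ^ 2 ∂ν) - ∑ j ∈ s, c j ^ 2 := by
  have hyej : ∀ j : κ, Integrable (fun x => y x * e j x) ν :=
    fun j => integrable_mul_of_memL2 hy (he j)
  have hejk : ∀ j k : κ, Integrable (fun x => e j x * e k x) ν :=
    fun j k => integrable_mul_of_memL2 (he j) (he k)
  have hexp : ∀ x, (y x - ∑ j ∈ s, c j * e j x) ^ 2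
      = y x ^ 2 - 2 * (∑ j ∈ s, c j * (y x * e j x))
        + ∑ j ∈ s, ∑ k ∈ s, (c j * c k) * (e j x * e k x) := by
    intro x
    have h1 : (∑ j ∈ s, c j * e j x) * (∑ j ∈ s, c j * e j x)
        = ∑ j ∈ s, ∑ k ∈ s, (c j * c k) * (e j x * e k x) := by
      rw [Finset.sum_mul_sum]
      exact Finset.sum_congr rfl fun j _ => Finset.sum_congr rfl fun k _ => by ring
    have h2 : y x * (∑ j ∈ s, c j * e j x) = ∑ j ∈ s, c j * (y x * e j x) := by
      rw [Finset.mul_sum]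
      exact Finset.sum_congr rfl fun j _ => by ring
    have h3 : (y x - ∑ j ∈ s, c j * e j x) ^ 2
        = y x ^ 2 - 2 * (y x * (∑ j ∈ s, c j * e j x))
          + (∑ j ∈ s, c j * e j x) * (∑ j ∈ s, c j * e j x) := by ring
    rw [h3, h1, h2]
  have hS1int : Integrable (fun x => ∑ j ∈ s, c j * (y x * e j x)) ν :=
    integrable_finset_sum s fun j _ => (hyej j).const_mul (c j)
  have hS2int : Integrable
      (fun x => ∑ j ∈ s, ∑ k ∈ s, (c j * c k) * (e j x * e k x)) ν :=
    integrable_finset_sum s fun j _ =>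
      integrable_finset_sum s fun k _ => (hejk j k).const_mul _
  have e1 : ∫ x, ∑ j ∈ s, c j * (y x * e j x) ∂ν = ∑ j ∈ s, c j ^ 2 := by
    rw [integral_finset_sum s fun j _ => (hyej j).const_mul (c j)]
    refine Finset.sum_congr rfl fun j _ => ?_
    rw [integral_const_mul, ← hcdef j, sq]
  have e2 : ∫ x, ∑ j ∈ s, ∑ k ∈ s, (c j * c k) * (e j x * e k x) ∂ν
      = ∑ j ∈ s, c j ^ 2 := by
    rw [integral_finset_sum s fun j _ =>
      integrable_finset_sum s fun k _ => (hejk j k).const_mul _]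
    refine Finset.sum_congr rfl fun j hj => ?_
    rw [integral_finset_sum s fun k _ => (hejk j k).const_mul _]
    have hterm : ∀ k ∈ s, (∫ x, (c j * c k) * (e j x * e k x) ∂ν)
        = if j = k then c j * c k else 0 := by
      intro k _
      rw [integral_const_mul, horth j k]
      split <;> simp
    rw [Finset.sum_congr rfl hterm, Finset.sum_ite_eq s j fun k => c j * c k,
      if_pos hj, sq]
  calc ∫ x, (y x - ∑ j ∈ s, c j * e j x) ^ 2 ∂ν
      = ∫ x, (y x ^ 2 - 2 * (∑ j ∈ s, c j * (y x * e j x))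
          + ∑ j ∈ s, ∑ k ∈ s, (c j * c k) * (e j x * e k x)) ∂ν := by
        simp only [hexp]
    _ = (∫ x, y x ^ 2 ∂ν) - 2 * (∫ x, ∑ j ∈ s, c j * (y x * e j x) ∂ν)
          + ∫ x, ∑ j ∈ s, ∑ k ∈ s, (c j * c k) * (e j x * e k x) ∂ν := by
        have hsub : Integrable
            (fun x => y x ^ 2 - 2 * ∑ j ∈ s, c j * (y x * e j x)) ν :=
          hy.integrable_sq.sub (hS1int.const_mul 2)
        rw [integral_add hsub hS2int,
          integral_sub hy.integrable_sq (hS1int.const_mul 2), integral_const_mul]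
    _ = (∫ x, y x ^ 2 ∂ν) - 2 * ∑ j ∈ s, c j ^ 2 + ∑ j ∈ s, c j ^ 2 := by
        rw [e1, e2]
    _ = (∫ x, y x ^ 2 ∂ν) - ∑ j ∈ s, c j ^ 2 := by ring

/-- The full `N`-variate, `m`-th order PDD truncation is the sum over all multi-indices
bounded componentwise by `m`. -/
lemma pddTrunc_eq_sum {N : ℕ} (m : ℕ) (μ : Fin N → MeasureTheory.Measure ℝ)
    (y : (Fin N → ℝ) → ℝ) (ψ : Fin N → ℕ → ℝ → ℝ) (hψ0 : ∀ i t, ψ i 0 t = 1)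
    (x : Fin N → ℝ) :
    pddTrunc μ y ψ N m x
      = ∑ j ∈ Finset.Icc (0 : Fin N → ℕ) (fun _ => m),
          pddCoeff μ y ψ Finset.univ j * prodPsi ψ Finset.univ j x := by
  classical
  have hzero_mem : (0 : Fin N → ℕ) ∈ Finset.Icc (0 : Fin N → ℕ) (fun _ => m) := by
    rw [Finset.mem_Icc]
    exact ⟨le_rfl, fun i => Nat.zero_le m⟩
  have hprod : ∀ (u : Finset (Fin N)) (j : Fin N → ℕ), (∀ i ∉ u, j i = 0) →
      prodPsi ψ u j = prodPsi ψ Finset.univ j := by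
    intro u j hj; funext z
    show ∏ i ∈ u, ψ i (j i) (z i) = ∏ i ∈ Finset.univ, ψ i (j i) (z i)
    exact Finset.prod_subset (Finset.subset_univ u) fun i _ hi => by
      rw [hj i hi, hψ0]
  have hcoeff : ∀ (u : Finset (Fin N)) (j : Fin N → ℕ), (∀ i ∉ u, j i = 0) →
      pddCoeff μ y ψ u j = pddCoeff μ y ψ Finset.univ j := by
    intro u j hj; unfold pddCoeff; rw [hprod u j hj]
  have hstep1 : pddTrunc μ y ψ N m x = (∫ z, y z ∂(joint μ)) +
      ∑ u ∈ Finset.univ.filter (fun u : Finset (Fin N) => u ≠ ∅ ∧ u.card ≤ N),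
        ∑ j ∈ indexFinset u m,
          pddCoeff μ y ψ Finset.univ j * prodPsi ψ Finset.univ j x := by
    unfold pddTrunc
    congr 1
    refine Finset.sum_congr rfl fun u _ => Finset.sum_congr rfl fun j hj => ?_
    have hj0 : ∀ i ∉ u, j i = 0 := by
      have := Finset.mem_filter.mp hj
      exact this.2.2
    rw [hcoeff u j hj0, hprod u j hj0]
  have hdisj : (↑(Finset.univ.filter
        (fun u : Finset (Fin N) => u ≠ ∅ ∧ u.card ≤ N)) :
        Set (Finset (Fin N))).PairwiseDisjoint (fun u => indexFinset u m) := by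
    intro u _ v _ huv
    refine Finset.disjoint_left.mpr fun j hju hjv => huv ?_
    have h1 := (Finset.mem_filter.mp hju).2
    have h2 := (Finset.mem_filter.mp hjv).2
    ext i
    constructor
    · intro hi
      by_contra hiv
      have ha := h2.2 i hiv
      have hb := h1.1 i hi
      omega
    · intro hi
      by_contra hiu
      have ha := h1.2 i hiu
      have hb := h2.1 i hi
      omega
  have hbiUnion : (Finset.univ.filter
        (fun u : Finset (Fin N) => u ≠ ∅ ∧ u.card ≤ N)).biUnion
        (fun u => indexFinset u m)
      = (Finset.Icc (0 : Fin N → ℕ) (fun _ => m)).erase 0 := by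
    ext j
    constructor
    · intro hj
      obtain ⟨u, hu, hju⟩ := Finset.mem_biUnion.mp hj
      have hufilt := (Finset.mem_filter.mp hu).2
      have hjfilt := Finset.mem_filter.mp hju
      refine Finset.mem_erase.mpr ⟨?_, hjfilt.1⟩
      obtain ⟨i, hi⟩ := Finset.nonempty_of_ne_empty hufilt.1
      intro h0
      have := hjfilt.2.1 i hi
      rw [h0] at this
      simp at this
    · intro hj
      obtain ⟨hj0, hjI⟩ := Finset.mem_erase.mp hj
      refine Finset.mem_biUnion.mpr
        ⟨Finset.univ.filter (fun i => j i ≠ 0), ?_, ?_⟩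
      · refine Finset.mem_filter.mpr ⟨Finset.mem_univ _, ?_, ?_⟩
        · obtain ⟨i, hi⟩ : ∃ i, j i ≠ 0 := by
            by_contra h
            push_neg at h
            exact hj0 (funext h)
          exact Finset.ne_empty_of_mem
            (Finset.mem_filter.mpr ⟨Finset.mem_univ _, hi⟩)
        · calc (Finset.univ.filter (fun i => j i ≠ 0)).card
              ≤ (Finset.univ : Finset (Fin N)).card := Finset.card_filter_le _ _
            _ = N := by simp
      · refine Finset.mem_filter.mpr ⟨hjI, fun i hi => ?_, fun i hi => ?_⟩
        · have := (Finset.mem_filter.mp hi).2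
          omega
        · have : ¬ j i ≠ 0 := fun h =>
            hi (Finset.mem_filter.mpr ⟨Finset.mem_univ _, h⟩)
          exact not_not.mp this
  have hFzero : pddCoeff μ y ψ Finset.univ (0 : Fin N → ℕ)
      * prodPsi ψ Finset.univ (0 : Fin N → ℕ) x = ∫ z, y z ∂(joint μ) := by
    have h1 : prodPsi ψ Finset.univ (0 : Fin N → ℕ) = fun _ : Fin N → ℝ => (1 : ℝ) := by
      funext z
      show ∏ i ∈ Finset.univ, ψ i ((0 : Fin N → ℕ) i) (z i) = 1
      simp [hψ0]
    unfold pddCoeff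
    rw [h1]
    simp
  calc pddTrunc μ y ψ N m x
      = (∫ z, y z ∂(joint μ)) +
          ∑ u ∈ Finset.univ.filter (fun u : Finset (Fin N) => u ≠ ∅ ∧ u.card ≤ N),
            ∑ j ∈ indexFinset u m,
              pddCoeff μ y ψ Finset.univ j * prodPsi ψ Finset.univ j x := hstep1
    _ = (∫ z, y z ∂(joint μ)) +
          ∑ j ∈ (Finset.Icc (0 : Fin N → ℕ) (fun _ => m)).erase 0,
            pddCoeff μ y ψ Finset.univ j * prodPsi ψ Finset.univ j x := by
        rw [← Finset.sum_biUnion hdisj, hbiUnion]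
    _ = pddCoeff μ y ψ Finset.univ (0 : Fin N → ℕ)
          * prodPsi ψ Finset.univ (0 : Fin N → ℕ) x +
          ∑ j ∈ (Finset.Icc (0 : Fin N → ℕ) (fun _ => m)).erase 0,
            pddCoeff μ y ψ Finset.univ j * prodPsi ψ Finset.univ j x := by
        rw [hFzero]
    _ = ∑ j ∈ Finset.Icc (0 : Fin N → ℕ) (fun _ => m),
          pddCoeff μ y ψ Finset.univ j * prodPsi ψ Finset.univ j x :=
        Finset.add_sum_erase _
          (fun j => pddCoeff μ y ψ Finset.univ j * prodPsi ψ Finset.univ j x)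
          hzero_mem

end Aux

/-- the mean-squared error of the `m`-th order PCE approximation is at least
that of the `N`-variate, `m`-th order PDD approximation, regardless of the values of the
expansion coefficients. -/
theorem stmt14 {N : ℕ} (m : ℕ) (hm : 1 ≤ m)
    (f : Fin N → ℝ → ℝ) (hf : ∀ i, Measurable (f i)) (hf0 : ∀ i t, 0 ≤ f i t)
    (μ : Fin N → MeasureTheory.Measure ℝ) [∀ i, IsProbabilityMeasure (μ i)]
    (hμ : ∀ i, μ i = (volume : MeasureTheory.Measure ℝ).withDensity
      fun t => ENNReal.ofReal (f i t))
    (y : (Fin N → ℝ) → ℝ) (hy : MemLp y 2 (joint μ))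
    (ψ : Fin N → ℕ → ℝ → ℝ) (hψ : IsONBasis μ ψ) :
    ∫ x, (y x - pddTrunc μ y ψ N m x) ^ 2 ∂(joint μ) ≤
      ∫ x, (y x - pceApprox μ y ψ m x) ^ 2 ∂(joint μ) := by
    classical
  obtain ⟨hψ0, hψmem, hψorth, -⟩ := hψ
  haveI hprob : IsProbabilityMeasure (joint μ) := by
    unfold joint; infer_instance
  have heq : ∀ j : Fin N → ℕ,
      prodPsi ψ Finset.univ j = fun x : Fin N → ℝ => ∏ i, ψ i (j i) (x i) :=
    fun j => rfl
  have he2 : ∀ j : Fin N → ℕ, MemLp (prodPsi ψ Finset.univ j) 2 (joint μ) := by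
    intro j
    have hint : Integrable (fun x : Fin N → ℝ => ∏ i, ψ i (j i) (x i)) (joint μ) :=
      integrable_joint_prod μ (fun i => (hψmem i (j i)).integrable one_le_two)
    have hsq : Integrable (fun x : Fin N → ℝ => (∏ i, ψ i (j i) (x i)) ^ 2) (joint μ) := by
      have h2 : Integrable
          (fun x : Fin N → ℝ => ∏ i, (ψ i (j i) (x i) * ψ i (j i) (x i))) (joint μ) :=
        integrable_joint_prod μ
          (fun i => integrable_mul_of_memL2 (hψmem i (j i)) (hψmem i (j i)))
      have hfe : (fun x : Fin N → ℝ => (∏ i, ψ i (j i) (x i)) ^ 2)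
          = fun x => ∏ i, (ψ i (j i) (x i) * ψ i (j i) (x i)) := by
        funext x; rw [sq, ← Finset.prod_mul_distrib]
      rw [hfe]; exact h2
    rw [heq j]
    exact (memLp_two_iff_integrable_sq hint.aestronglyMeasurable).mpr hsq
  have horth : ∀ j k : Fin N → ℕ,
      ∫ x, prodPsi ψ Finset.univ j x * prodPsi ψ Finset.univ k x ∂(joint μ)
        = if j = k then 1 else 0 := by
    intro j k
    have h1 : (fun x : Fin N → ℝ =>
          prodPsi ψ Finset.univ j x * prodPsi ψ Finset.univ k x)
        = fun x => ∏ i, (ψ i (j i) (x i) * ψ i (k i) (x i)) := by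
      funext x
      show (∏ i, ψ i (j i) (x i)) * (∏ i, ψ i (k i) (x i)) = _
      rw [← Finset.prod_mul_distrib]
    calc ∫ x, prodPsi ψ Finset.univ j x * prodPsi ψ Finset.univ k x ∂(joint μ)
        = ∫ x, ∏ i, (ψ i (j i) (x i) * ψ i (k i) (x i)) ∂(joint μ) := by rw [h1]
      _ = ∏ i, ∫ t, ψ i (j i) t * ψ i (k i) t ∂(μ i) :=
          integral_joint_prod μ (fun i t => ψ i (j i) t * ψ i (k i) t)
      _ = if j = k then 1 else 0 := by
          by_cases hjk : j = k
          · subst hjk; simp [hψorth]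
          · rw [if_neg hjk]
            obtain ⟨i0, hi0⟩ : ∃ i, j i ≠ k i := by
              by_contra h; push_neg at h; exact hjk (funext h)
            exact Finset.prod_eq_zero (Finset.mem_univ i0)
              (by rw [hψorth, if_neg hi0])
  have hcdef : ∀ j : Fin N → ℕ, pddCoeff μ y ψ Finset.univ j
      = ∫ t, y t * prodPsi ψ Finset.univ j t ∂(joint μ) := fun j => rfl
  have hA := proj_error (Finset.Icc (0 : Fin N → ℕ) (fun _ => m)) y
    (prodPsi ψ Finset.univ) hy he2 horth (pddCoeff μ y ψ Finset.univ) hcdef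
  have hB := proj_error ((Finset.Icc (0 : Fin N → ℕ) fun _ => m).filter
    (fun j => ∑ i, j i ≤ m)) y (prodPsi ψ Finset.univ) hy he2 horth
    (pddCoeff μ y ψ Finset.univ) hcdef
  have hpdd : ∀ x, pddTrunc μ y ψ N m x
      = ∑ j ∈ Finset.Icc (0 : Fin N → ℕ) (fun _ => m),
          pddCoeff μ y ψ Finset.univ j * prodPsi ψ Finset.univ j x :=
    pddTrunc_eq_sum m μ y ψ hψ0
  have hL : ∫ x, (y x - pddTrunc μ y ψ N m x) ^ 2 ∂(joint μ)
      = (∫ x, y x ^ 2 ∂(joint μ))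
        - ∑ j ∈ Finset.Icc (0 : Fin N → ℕ) (fun _ => m),
            pddCoeff μ y ψ Finset.univ j ^ 2 := by
    simp only [hpdd]; exact hA
  have hR : ∫ x, (y x - pceApprox μ y ψ m x) ^ 2 ∂(joint μ)
      = (∫ x, y x ^ 2 ∂(joint μ))
        - ∑ j ∈ (Finset.Icc (0 : Fin N → ℕ) fun _ => m).filter
            (fun j => ∑ i, j i ≤ m), pddCoeff μ y ψ Finset.univ j ^ 2 := by
    unfold pceApprox; exact hB
  rw [hL, hR]
  apply sub_le_sub_left
  exact Finset.sum_le_sum_of_subset_of_nonneg (Finset.filter_subset _ _)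
    (fun j _ _ => sq_nonneg _)
end

section
/- Let X = (X₁,…,X_N) be a random vector with independent components having joint density f_X, let y be square-integrable with respect to f_X with PDD coefficients C_{u,j}, and let 1 ≤ S < N and m ≥ 1. Suppose all PDD coefficients of component functions involving more than S variables vanish: C_{u,j} = 0 for every u with |u| > S and every multi-index j with all components ≥ 1. Then the error of the m-th order PCE approximation is at least the error of the S-variate, m-th order PDD approximation: e_m := E[(y(X) − y̌_m(X))²] ≥ E[(y(X) − ỹ_{S,m}(X))²] =: e_{S,m}. -/
open MeasureTheory Finset
open scoped BigOperators Classical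

open scoped ENNReal in
lemma helper_integral_pi_prod {N : ℕ} (μ : Fin N → Measure ℝ) [hsf : ∀ i, SigmaFinite (μ i)]
    (g : Fin N → ℝ → ℝ) :
    ∫ x : Fin N → ℝ, ∏ i, g i (x i) ∂(Measure.pi μ) = ∏ i, ∫ t, g i t ∂(μ i) := by
  exact MeasureTheory.integral_fintype_prod_eq_prod (𝕜 := ℝ) (E := fun _ => ℝ) g (μ := μ)

lemma helper_integrable_pi_prod {N : ℕ} (μ : Fin N → Measure ℝ) [hsf : ∀ i, SigmaFinite (μ i)]
    (g : Fin N → ℝ → ℝ) (hg : ∀ i, Integrable (g i) (μ i)) :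
    Integrable (fun x : Fin N → ℝ => ∏ i, g i (x i)) (Measure.pi μ) := by
  exact MeasureTheory.Integrable.fintype_prod_dep (E := fun _ => ℝ) (f := g) (μ := μ) hg

open scoped ENNReal in
lemma helper_L2_mul {α : Type*} [MeasurableSpace α] {ν : Measure α} {g h : α → ℝ}
    (hg : MemLp g 2 ν) (hh : MemLp h 2 ν) : Integrable (fun x => g x * h x) ν := by
  have hp : (1 : ℝ≥0∞) / 1 = 1 / 2 + 1 / 2 := by
    rw [one_div_one]; exact (ENNReal.add_halves 1).symm
  have h1 : MemLp (h • g) 1 ν := hg.smul hh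
  have h2 : (fun x => g x * h x) = h • g := by funext x; simp [mul_comm]
  rw [h2]; exact memLp_one_iff_integrable.mp h1


/-- if all PDD coefficients of component functions involving more than `S`
variables vanish, then the mean-squared error of the `m`-th order PCE approximation is at
least that of the `S`-variate, `m`-th order PDD approximation. -/

theorem stmt15 {N : ℕ} (S m : ℕ) (hS1 : 1 ≤ S) (hSN : S < N) (hm : 1 ≤ m)
    (f : Fin N → ℝ → ℝ) (hf : ∀ i, Measurable (f i)) (hf0 : ∀ i t, 0 ≤ f i t)
    (μ : Fin N → MeasureTheory.Measure ℝ) [∀ i, IsProbabilityMeasure (μ i)]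
    (hμ : ∀ i, μ i = (volume : MeasureTheory.Measure ℝ).withDensity
      fun t => ENNReal.ofReal (f i t))
    (y : (Fin N → ℝ) → ℝ) (hy : MemLp y 2 (joint μ))
    (ψ : Fin N → ℕ → ℝ → ℝ) (hψ : IsONBasis μ ψ)
    (hC : ∀ (u : Finset (Fin N)) (j : Fin N → ℕ), S < u.card → j ∈ indexSet u →
      pddCoeff μ y ψ u j = 0) :
    ∫ x, (y x - pddTrunc μ y ψ S m x) ^ 2 ∂(joint μ) ≤
      ∫ x, (y x - pceApprox μ y ψ m x) ^ 2 ∂(joint μ) := by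
  classical
  obtain ⟨hψ1, hψ2, hψ3, -⟩ := hψ
  haveI : IsProbabilityMeasure (joint μ) := by unfold joint; infer_instance
  have hjoint : joint μ = Measure.pi μ := rfl
  set A : Finset (Fin N → ℕ) :=
    (Finset.Icc 0 fun _ => m).filter
      (fun j => (Finset.univ.filter fun i => j i ≠ 0).card ≤ S) with hAdef
  set B : Finset (Fin N → ℕ) :=
    (Finset.Icc (0 : Fin N → ℕ) fun _ => m).filter (fun j => ∑ i, j i ≤ m) with hBdef
  have hsupp : ∀ (u : Finset (Fin N)) (j : Fin N → ℕ), (∀ i ∉ u, j i = 0) →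
      ∀ x, prodPsi ψ u j x = prodPsi ψ Finset.univ j x := by
    intro u j hj x
    exact Finset.prod_subset (Finset.subset_univ u) (fun i _ hi => by rw [hj i hi, hψ1])
  have hcoeff : ∀ (u : Finset (Fin N)) (j : Fin N → ℕ), (∀ i ∉ u, j i = 0) →
      pddCoeff μ y ψ u j = pddCoeff μ y ψ Finset.univ j := by
    intro u j hj
    unfold pddCoeff
    exact integral_congr_ae (Filter.Eventually.of_forall fun x => by simp only [hsupp u j hj x])
  have hortho : ∀ j k, ∫ x, prodPsi ψ Finset.univ j x * prodPsi ψ Finset.univ k x ∂(joint μ)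
      = if j = k then (1 : ℝ) else 0 := by
    intro j k
    have h1 : (fun x : Fin N → ℝ => prodPsi ψ Finset.univ j x * prodPsi ψ Finset.univ k x)
        = fun x => ∏ i, (ψ i (j i) (x i) * ψ i (k i) (x i)) := by
      funext x
      simp only [prodPsi]
      rw [← Finset.prod_mul_distrib]
    rw [show (∫ x, prodPsi ψ Finset.univ j x * prodPsi ψ Finset.univ k x ∂(joint μ))
        = ∫ x, ∏ i, (ψ i (j i) (x i) * ψ i (k i) (x i)) ∂(joint μ) from by rw [h1]]
    rw [hjoint, helper_integral_pi_prod μ (fun i => fun t => ψ i (j i) t * ψ i (k i) t)]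
    rw [Finset.prod_congr rfl fun i _ => hψ3 i (j i) (k i)]
    by_cases h : j = k
    · simp [h]
    · rw [if_neg h]
      obtain ⟨i, hi⟩ : ∃ i, j i ≠ k i := by
        by_contra hcon; push_neg at hcon; exact h (funext hcon)
      exact Finset.prod_eq_zero (Finset.mem_univ i) (if_neg hi)
  have hψL1 : ∀ i k, Integrable (ψ i k) (μ i) := fun i k =>
    (hψ2 i k).integrable (by norm_num)
  have hΦint : ∀ j, Integrable (prodPsi ψ Finset.univ j) (joint μ) := by
    intro j
    have h := helper_integrable_pi_prod μ (fun i => ψ i (j i)) (fun i => hψL1 i (j i))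
    rw [hjoint]
    exact h
  have hΦ2 : ∀ j, MemLp (prodPsi ψ Finset.univ j) 2 (joint μ) := by
    intro j
    have hsq0 : Integrable (fun x : Fin N → ℝ => ∏ i, ψ i (j i) (x i) ^ 2) (Measure.pi μ) :=
      helper_integrable_pi_prod μ (fun i => fun t => ψ i (j i) t ^ 2)
        (fun i => (hψ2 i (j i)).integrable_sq)
    have hsq : Integrable (fun x => prodPsi ψ Finset.univ j x ^ 2) (joint μ) := by
      rw [hjoint]
      exact hsq0.congr (Filter.Eventually.of_forall fun x => by
        simp only [prodPsi]; rw [Finset.prod_pow])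
    exact (memLp_two_iff_integrable_sq (hΦint j).aestronglyMeasurable).mpr hsq
  have hyΦ : ∀ j, Integrable (fun x => y x * prodPsi ψ Finset.univ j x) (joint μ) :=
    fun j => helper_L2_mul hy (hΦ2 j)
  have hΦΦint : ∀ j k, Integrable
      (fun x => prodPsi ψ Finset.univ j x * prodPsi ψ Finset.univ k x) (joint μ) :=
    fun j k => helper_L2_mul (hΦ2 j) (hΦ2 k)
  set c : (Fin N → ℕ) → ℝ := pddCoeff μ y ψ Finset.univ with hcdef
  set Q : (Fin N → ℝ) → ℝ := fun x => ∑ j ∈ A, c j * prodPsi ψ Finset.univ j x with hQdef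
  set P : (Fin N → ℝ) → ℝ := fun x => ∑ j ∈ B, c j * prodPsi ψ Finset.univ j x with hPdef
  have hPeq : ∀ x, pceApprox μ y ψ m x = P x := fun x => rfl
  have hQeq : ∀ x, pddTrunc μ y ψ S m x = Q x := by
    intro x
    have h0A : (0 : Fin N → ℕ) ∈ A := by
      rw [hAdef]
      refine Finset.mem_filter.mpr ⟨Finset.mem_Icc.mpr ⟨le_refl _, fun i => Nat.zero_le m⟩, ?_⟩
      simp
    rw [hQdef]
    show pddTrunc μ y ψ S m x = ∑ j ∈ A, c j * prodPsi ψ Finset.univ j x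
    rw [← Finset.add_sum_erase A (fun j => c j * prodPsi ψ Finset.univ j x) h0A]
    unfold pddTrunc
    congr 1
    · have h1 : ∀ z : Fin N → ℝ, prodPsi ψ Finset.univ (0 : Fin N → ℕ) z = 1 := by
        intro z
        simp only [prodPsi]
        exact Finset.prod_eq_one fun i _ => hψ1 i (z i)
      rw [hcdef]
      show (∫ z, y z ∂(joint μ))
          = pddCoeff μ y ψ Finset.univ 0 * prodPsi ψ Finset.univ (0 : Fin N → ℕ) x
      rw [h1 x, mul_one]
      unfold pddCoeff
      exact integral_congr_ae (Filter.Eventually.of_forall fun z => by simp only [h1 z, mul_one])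
    · rw [Finset.sum_sigma']
      have hmem : ∀ p : Σ _u : Finset (Fin N), (Fin N → ℕ),
          p ∈ (Finset.univ.filter
              (fun u : Finset (Fin N) => u ≠ ∅ ∧ u.card ≤ S)).sigma
            (fun u => indexFinset u m) →
          (p.1 ≠ ∅ ∧ p.1.card ≤ S) ∧ p.2 ∈ Finset.Icc (0 : Fin N → ℕ) (fun _ => m) ∧
            (∀ i ∈ p.1, 1 ≤ p.2 i) ∧ (∀ i ∉ p.1, p.2 i = 0) := by
        intro p hp
        obtain ⟨h1, h2⟩ := Finset.mem_sigma.mp hp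
        have h3 := (Finset.mem_filter.mp h1).2
        unfold indexFinset at h2
        have h4 := Finset.mem_filter.mp h2
        exact ⟨h3, h4.1, h4.2.1, h4.2.2⟩
      have hsuppeq : ∀ p : Σ _u : Finset (Fin N), (Fin N → ℕ),
          p ∈ (Finset.univ.filter
              (fun u : Finset (Fin N) => u ≠ ∅ ∧ u.card ≤ S)).sigma
            (fun u => indexFinset u m) →
          Finset.univ.filter (fun i => p.2 i ≠ 0) = p.1 := by
        intro p hp
        obtain ⟨-, -, h3, h4⟩ := hmem p hp
        ext i
        simp only [Finset.mem_filter, Finset.mem_univ, true_and]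
        constructor
        · intro hne
          by_contra hiu
          exact hne (h4 i hiu)
        · intro hiu
          exact Nat.one_le_iff_ne_zero.mp (h3 i hiu)
      refine Finset.sum_nbij' (fun p => p.2)
        (fun j => ⟨Finset.univ.filter (fun i => j i ≠ 0), j⟩) ?_ ?_ ?_ ?_ ?_
      · intro p hp
        obtain ⟨⟨hne, hcard⟩, hIcc, h3, h4⟩ := hmem p hp
        show p.2 ∈ A.erase 0
        refine Finset.mem_erase.mpr ⟨?_, ?_⟩
        · obtain ⟨i, hi⟩ := Finset.nonempty_iff_ne_empty.mpr hne
          intro h0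
          have : p.2 i = 0 := by rw [h0]; rfl
          have := h3 i hi
          omega
        · rw [hAdef]
          refine Finset.mem_filter.mpr ⟨hIcc, ?_⟩
          rw [hsuppeq p hp]
          exact hcard
      · intro j hj
        obtain ⟨hj0, hjA⟩ := Finset.mem_erase.mp hj
        show (⟨Finset.univ.filter (fun i => j i ≠ 0), j⟩ :
            Σ _u : Finset (Fin N), (Fin N → ℕ)) ∈ _
        rw [hAdef] at hjA
        obtain ⟨hIcc, hcard⟩ := Finset.mem_filter.mp hjA
        refine Finset.mem_sigma.mpr ⟨?_, ?_⟩
        · refine Finset.mem_filter.mpr ⟨Finset.mem_univ _, ?_, hcard⟩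
          show Finset.univ.filter (fun i => j i ≠ 0) ≠ ∅
          intro hempty
          apply hj0
          funext i
          by_contra hne
          have : i ∈ Finset.univ.filter (fun i => j i ≠ 0) :=
            Finset.mem_filter.mpr ⟨Finset.mem_univ i, fun h => hne (by rw [h]; rfl)⟩
          rw [hempty] at this
          exact absurd this (Finset.notMem_empty i)
        · unfold indexFinset
          refine Finset.mem_filter.mpr ⟨hIcc, ?_, ?_⟩
          · intro i hi
            exact Nat.one_le_iff_ne_zero.mpr (Finset.mem_filter.mp hi).2
          · intro i hi
            by_contra hne
            exact hi (Finset.mem_filter.mpr ⟨Finset.mem_univ i, hne⟩)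
      · intro p hp
        show (⟨Finset.univ.filter (fun i => p.2 i ≠ 0), p.2⟩ :
            Σ _u : Finset (Fin N), (Fin N → ℕ)) = p
        refine Sigma.ext ?_ ?_
        · exact hsuppeq p hp
        · rfl
      · intro j hj
        rfl
      · intro p hp
        obtain ⟨-, -, -, h4⟩ := hmem p hp
        show pddCoeff μ y ψ p.1 p.2 * prodPsi ψ p.1 p.2 x
            = c p.2 * prodPsi ψ Finset.univ p.2 x
        rw [hcoeff p.1 p.2 h4, hsupp p.1 p.2 h4 x]
  have hQ2 : MemLp Q 2 (joint μ) := by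
    rw [hQdef]
    exact memLp_finset_sum A (fun j _ => ((hΦ2 j).const_mul (c j)))
  have hP2 : MemLp P 2 (joint μ) := by
    rw [hPdef]
    exact memLp_finset_sum B (fun j _ => ((hΦ2 j).const_mul (c j)))
  have hQΦ : ∀ j, Integrable (fun x => Q x * prodPsi ψ Finset.univ j x) (joint μ) :=
    fun j => helper_L2_mul hQ2 (hΦ2 j)
  have hQeval : ∀ j, ∫ x, Q x * prodPsi ψ Finset.univ j x ∂(joint μ)
      = if j ∈ A then c j else 0 := by
    intro j
    have h1 : ∀ x, Q x * prodPsi ψ Finset.univ j x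
        = ∑ k ∈ A, c k * (prodPsi ψ Finset.univ k x * prodPsi ψ Finset.univ j x) := by
      intro x
      rw [hQdef]
      show (∑ k ∈ A, c k * prodPsi ψ Finset.univ k x) * prodPsi ψ Finset.univ j x = _
      rw [Finset.sum_mul]
      exact Finset.sum_congr rfl fun k _ => by ring
    rw [integral_congr_ae (Filter.Eventually.of_forall h1)]
    rw [integral_finset_sum _ (fun k _ => (hΦΦint k j).const_mul (c k))]
    have h2 : ∀ k ∈ A, (∫ x, c k *
        (prodPsi ψ Finset.univ k x * prodPsi ψ Finset.univ j x) ∂(joint μ))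
        = if k = j then c j else 0 := by
      intro k _
      rw [integral_const_mul, hortho k j]
      by_cases h : k = j
      · simp [h]
      · simp [h]
    rw [Finset.sum_congr rfl h2, Finset.sum_ite_eq' A j (fun _ => c j)]
  have hcz : ∀ j ∈ B, j ∉ A → c j = 0 := by
    intro j hjB hjA
    have hjIcc : j ∈ Finset.Icc (0 : Fin N → ℕ) (fun _ => m) := by
      rw [hBdef] at hjB
      exact (Finset.mem_filter.mp hjB).1
    have hcard : S < (Finset.univ.filter (fun i => j i ≠ 0)).card := by
      by_contra h
      push_neg at h
      exact hjA (by rw [hAdef]; exact Finset.mem_filter.mpr ⟨hjIcc, h⟩)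
    have hjset : j ∈ indexSet (Finset.univ.filter (fun i => j i ≠ 0)) := by
      refine ⟨fun i hi => Nat.one_le_iff_ne_zero.mpr (Finset.mem_filter.mp hi).2,
        fun i hi => ?_⟩
      by_contra hne
      exact hi (Finset.mem_filter.mpr ⟨Finset.mem_univ i, hne⟩)
    exact (hcoeff _ j hjset.2).symm.trans (hC _ j hcard hjset)
  have horthyQ : ∀ j, j ∈ A ∪ B →
      ∫ x, (y x - Q x) * prodPsi ψ Finset.univ j x ∂(joint μ) = 0 := by
    intro j hj
    have h1 : ∀ x, (y x - Q x) * prodPsi ψ Finset.univ j x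
        = y x * prodPsi ψ Finset.univ j x - Q x * prodPsi ψ Finset.univ j x := fun x => by ring
    rw [integral_congr_ae (Filter.Eventually.of_forall h1),
      integral_sub (hyΦ j) (hQΦ j), hQeval j]
    have hyint : ∫ x, y x * prodPsi ψ Finset.univ j x ∂(joint μ) = c j := by
      rw [hcdef]
      rfl
    rw [hyint]
    by_cases hjA : j ∈ A
    · rw [if_pos hjA, sub_self]
    · rw [if_neg hjA, sub_zero]
      exact hcz j ((Finset.mem_union.mp hj).resolve_left hjA) hjA
  have hyQ2 : MemLp (fun x => y x - Q x) 2 (joint μ) := hy.sub hQ2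
  have hQP2 : MemLp (fun x => Q x - P x) 2 (joint μ) := hQ2.sub hP2
  have hkey : ∫ x, (y x - Q x) * (Q x - P x) ∂(joint μ) = 0 := by
    have hint : ∀ j, Integrable
        (fun x => c j * ((y x - Q x) * prodPsi ψ Finset.univ j x)) (joint μ) :=
      fun j => (helper_L2_mul hyQ2 (hΦ2 j)).const_mul (c j)
    have h1 : ∀ x, (y x - Q x) * (Q x - P x)
        = (∑ j ∈ A, c j * ((y x - Q x) * prodPsi ψ Finset.univ j x))
          - ∑ j ∈ B, c j * ((y x - Q x) * prodPsi ψ Finset.univ j x) := by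
      intro x
      have h2 : Q x - P x = (∑ j ∈ A, c j * prodPsi ψ Finset.univ j x)
          - ∑ j ∈ B, c j * prodPsi ψ Finset.univ j x := by
        simp only [hQdef, hPdef]
      rw [h2, mul_sub, Finset.mul_sum, Finset.mul_sum]
      congr 1 <;> exact Finset.sum_congr rfl fun j _ => by ring
    rw [integral_congr_ae (Filter.Eventually.of_forall h1),
      integral_sub (integrable_finset_sum A fun j _ => hint j)
        (integrable_finset_sum B fun j _ => hint j),
      integral_finset_sum A (fun j _ => hint j),
      integral_finset_sum B (fun j _ => hint j)]
    have hz : ∀ (s : Finset (Fin N → ℕ)), (∀ j ∈ s, j ∈ A ∪ B) →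
        (∑ j ∈ s, ∫ x, c j * ((y x - Q x) * prodPsi ψ Finset.univ j x) ∂(joint μ)) = 0 := by
      intro s hs
      refine Finset.sum_eq_zero fun j hj => ?_
      rw [integral_const_mul, horthyQ j (hs j hj), mul_zero]
    rw [hz A (fun j hj => Finset.mem_union_left _ hj),
      hz B (fun j hj => Finset.mem_union_right _ hj), sub_zero]
  have i1 : Integrable (fun x => (y x - Q x) ^ 2) (joint μ) := hyQ2.integrable_sq
  have i2 : Integrable (fun x => (y x - Q x) * (Q x - P x)) (joint μ) :=
    helper_L2_mul hyQ2 hQP2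
  have i3 : Integrable (fun x => (Q x - P x) ^ 2) (joint μ) := hQP2.integrable_sq
  have hgoalL : ∫ x, (y x - pddTrunc μ y ψ S m x) ^ 2 ∂(joint μ)
      = ∫ x, (y x - Q x) ^ 2 ∂(joint μ) :=
    integral_congr_ae (Filter.Eventually.of_forall fun x => by simp only [hQeq x])
  have hgoalR : ∫ x, (y x - pceApprox μ y ψ m x) ^ 2 ∂(joint μ)
      = ∫ x, (y x - P x) ^ 2 ∂(joint μ) :=
    integral_congr_ae (Filter.Eventually.of_forall fun x => by simp only [hPeq x])
  rw [hgoalL, hgoalR]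
  have hexp : ∀ x : Fin N → ℝ, (y x - P x) ^ 2
      = (y x - Q x) ^ 2 + (2 * ((y x - Q x) * (Q x - P x)) + (Q x - P x) ^ 2) :=
    fun x => by ring
  have i4 : Integrable (fun x => 2 * ((y x - Q x) * (Q x - P x)) + (Q x - P x) ^ 2)
      (joint μ) := (i2.const_mul 2).add i3
  rw [integral_congr_ae (Filter.Eventually.of_forall hexp),
    integral_add i1 i4, integral_add (i2.const_mul 2) i3,
    integral_const_mul, hkey]
  have h3 : 0 ≤ ∫ x, (Q x - P x) ^ 2 ∂(joint μ) := integral_nonneg fun x => sq_nonneg _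
  linarith
end
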